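/- arXiv:1005.0016 — 5 statements merged into one kernel-verified Lean document; each statement's English description precedes it below -/
import Mathlib

section
/- In any ortholattice, the condition (a ↔ b = 1 ⟺ a = b) holds if and only if the ortholattice is orthomodular (i.e., a ≤ b implies b = a ∪ (a' ∩ b)). -/
/-- An ortholattice: a bounded lattice with an orthocomplementation. -/
class Ortholattice (α : Type*) extends Lattice α, BoundedOrder α, Compl α where
  sup_compl : ∀ a : α, a ⊔ aᶜ = ⊤
  inf_compl : ∀ a : α, a ⊓ aᶜ = ⊥
  compl_antitone : ∀ a b : α, a ≤ b → bᶜ ≤ aᶜ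
  compl_compl : ∀ a : α, aᶜᶜ = a

/-- The Sasaki hook `a → b := a' ∪ (a ∩ b)`. -/
def shook {α : Type*} [Ortholattice α] (a b : α) : α := aᶜ ⊔ (a ⊓ b)

namespace OLaux

variable {α : Type*} [Ortholattice α]

lemma demorgan (x y : α) : (x ⊔ y)ᶜ = xᶜ ⊓ yᶜ := by
  apply le_antisymm
  · exact le_inf (Ortholattice.compl_antitone _ _ le_sup_left)
      (Ortholattice.compl_antitone _ _ le_sup_right)
  · have hx : x ≤ (xᶜ ⊓ yᶜ)ᶜ := by
      have := Ortholattice.compl_antitone (xᶜ ⊓ yᶜ) xᶜ inf_le_left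
      rwa [Ortholattice.compl_compl] at this
    have hy : y ≤ (xᶜ ⊓ yᶜ)ᶜ := by
      have := Ortholattice.compl_antitone (xᶜ ⊓ yᶜ) yᶜ inf_le_right
      rwa [Ortholattice.compl_compl] at this
    have := Ortholattice.compl_antitone (x ⊔ y) ((xᶜ ⊓ yᶜ)ᶜ) (sup_le hx hy)
    rwa [Ortholattice.compl_compl] at this

lemma top_compl : (⊤ : α)ᶜ = ⊥ := by
  have := Ortholattice.inf_compl (⊤ : α)
  rwa [top_inf_eq] at this

end OLaux

/-- In any ortholattice, the condition `a ↔ b = 1 ⟺ a = b` (where `a ↔ b = 1`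
means `a → b = 1` and `b → a = 1`) holds iff the ortholattice is orthomodular. -/
theorem stmt_1 {α : Type*} [Ortholattice α] :
    (∀ a b : α, (shook a b = ⊤ ∧ shook b a = ⊤) ↔ a = b) ↔
      (∀ a b : α, a ≤ b → b = a ⊔ (aᶜ ⊓ b)) := by
  constructor
  · intro H a b hab
    set c := a ⊔ (aᶜ ⊓ b) with hc
    have hcb : c ≤ b := sup_le hab inf_le_right
    have h1 : shook c b = ⊤ := by
      rw [shook, inf_eq_left.mpr hcb, sup_comm, Ortholattice.sup_compl]
    have h2 : shook b c = ⊤ := by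
      rw [shook, inf_eq_right.mpr hcb, hc, ← sup_assoc]
      have hdm : (aᶜ ⊓ b)ᶜ = a ⊔ bᶜ := by
        conv_lhs => rw [← Ortholattice.compl_compl b]
        rw [← OLaux.demorgan, Ortholattice.compl_compl]
      rw [sup_comm bᶜ a, ← hdm, sup_comm, Ortholattice.sup_compl]
    exact ((H c b).mp ⟨h1, h2⟩).symm
  · intro H a b
    constructor
    · rintro ⟨h1, h2⟩
      have key : ∀ x y : α, shook x y = ⊤ → x ≤ y := by
        intro x y h
        rw [shook] at h
        have hom := H (x ⊓ y) x inf_le_left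
        have hbot : (x ⊓ y)ᶜ ⊓ x = ⊥ := by
          have h2 : (xᶜ ⊔ (x ⊓ y))ᶜ = ⊥ := by rw [h, OLaux.top_compl]
          rw [OLaux.demorgan, Ortholattice.compl_compl] at h2
          rw [inf_comm]
          exact h2
        rw [hbot, sup_bot_eq] at hom
        exact hom.trans_le inf_le_right
      exact le_antisymm (key a b h1) (key b a h2)
    · rintro rfl
      constructor <;>
        · rw [shook, inf_idem, sup_comm, Ortholattice.sup_compl]
end

section
/- For any subspaces M₀, M₁, N₀, N₁ of a Hilbert space (not necessarily closed), (M₀ + N₀) ∩ (M₁ + N₁) ⊆ N₀ + (M₀ ∩ (M₁ + ((M₀ + M₁) ∩ (N₀ + N₁)))). -/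
/-- For any subspaces `M₀, M₁, N₀, N₁` of a Hilbert space (not necessarily
closed), with `⊔` the subspace sum and `⊓` intersection:
`(M₀+N₀) ∩ (M₁+N₁) ≤ N₀ + (M₀ ∩ (M₁ + ((M₀+M₁) ∩ (N₀+N₁))))`. -/
theorem stmt_5 {E : Type*} [NormedAddCommGroup E] [InnerProductSpace ℂ E]
    [CompleteSpace E] (M₀ M₁ N₀ N₁ : Submodule ℂ E) :
    (M₀ ⊔ N₀) ⊓ (M₁ ⊔ N₁) ≤ N₀ ⊔ (M₀ ⊓ (M₁ ⊔ ((M₀ ⊔ M₁) ⊓ (N₀ ⊔ N₁)))) := by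
  rintro x ⟨h0, h1⟩
  rw [SetLike.mem_coe, Submodule.mem_sup] at h0 h1
  obtain ⟨m₀, hm₀, n₀, hn₀, rfl⟩ := h0
  obtain ⟨m₁, hm₁, n₁, hn₁, heq⟩ := h1
  have hd : m₀ - m₁ = n₁ - n₀ := by rw [sub_eq_sub_iff_add_eq_add, ← heq]; abel
  have hmem : m₀ - m₁ ∈ (M₀ ⊔ M₁) ⊓ (N₀ ⊔ N₁) := by
    constructor
    · exact Submodule.sub_mem _ (Submodule.mem_sup_left hm₀) (Submodule.mem_sup_right hm₁)
    · rw [hd]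
      exact Submodule.sub_mem _ (Submodule.mem_sup_right hn₁) (Submodule.mem_sup_left hn₀)
  exact Submodule.mem_sup.mpr ⟨n₀, hn₀, m₀,
    ⟨hm₀, Submodule.mem_sup.mpr ⟨m₁, hm₁, m₀ - m₁, hmem, by abel⟩⟩, by abel⟩
end

section
/- For any subspaces M₀, M₁, M₂, N₀, N₁, N₂ of a Hilbert space, defining T₁(i,j) = (Mᵢ + Mⱼ) ∩ (Nᵢ + Nⱼ) and T₂(i,j,k) = T₁(i,j) ∩ (T₁(i,k) + T₁(j,k)), the inclusion (M₀+N₀) ∩ (M₁+N₁) ∩ (M₂+N₂) ⊆ N₀ + (M₀ ∩ (M₁ + T₂(0,1,2))) holds. -/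
/-- The `n = 2` case of the generalized orthoarguesian subspace condition:
for subspaces `M₀, M₁, M₂, N₀, N₁, N₂` of a Hilbert space, with
`T₁(i,j) = (Mᵢ + Mⱼ) ∩ (Nᵢ + Nⱼ)` and `T₂(0,1,2) = T₁(0,1) ∩ (T₁(0,2) + T₁(1,2))`,
we have `(M₀+N₀) ∩ (M₁+N₁) ∩ (M₂+N₂) ⊆ N₀ + (M₀ ∩ (M₁ + T₂(0,1,2)))`. -/
theorem stmt_6 {E : Type*} [NormedAddCommGroup E] [InnerProductSpace ℂ E]
    [CompleteSpace E] (M₀ M₁ M₂ N₀ N₁ N₂ : Submodule ℂ E) :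
    (M₀ ⊔ N₀) ⊓ (M₁ ⊔ N₁) ⊓ (M₂ ⊔ N₂) ≤
      N₀ ⊔ (M₀ ⊓ (M₁ ⊔
        (((M₀ ⊔ M₁) ⊓ (N₀ ⊔ N₁)) ⊓
          (((M₀ ⊔ M₂) ⊓ (N₀ ⊔ N₂)) ⊔ ((M₁ ⊔ M₂) ⊓ (N₁ ⊔ N₂)))))) := by
  rintro x ⟨⟨hx0, hx1⟩, hx2⟩
  simp only [SetLike.mem_coe, Submodule.mem_sup] at hx0 hx1 hx2
  obtain ⟨m₀, hm₀, n₀, hn₀, h0⟩ := hx0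
  obtain ⟨m₁, hm₁, n₁, hn₁, h1⟩ := hx1
  obtain ⟨m₂, hm₂, n₂, hn₂, h2⟩ := hx2
  simp only [SetLike.mem_coe, Submodule.mem_sup]
  refine ⟨n₀, hn₀, m₀, ⟨hm₀, ?_⟩, by rw [← h0]; abel⟩
  simp only [SetLike.mem_coe, Submodule.mem_sup]
  refine ⟨m₁, hm₁, m₀ - m₁, ⟨⟨?_, ?_⟩, ?_⟩, by abel⟩
  · exact Submodule.sub_mem _ (Submodule.mem_sup_left hm₀) (Submodule.mem_sup_right hm₁)
  · have : m₀ - m₁ = n₁ - n₀ := by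
      rw [sub_eq_sub_iff_add_eq_add, h0, add_comm n₁ m₁, h1]
    rw [this]
    exact Submodule.sub_mem _ (Submodule.mem_sup_right hn₁) (Submodule.mem_sup_left hn₀)
  · simp only [SetLike.mem_coe, Submodule.mem_sup]
    refine ⟨m₀ - m₂, ⟨?_, ?_⟩, m₂ - m₁, ⟨?_, ?_⟩, by abel⟩
    · exact Submodule.sub_mem _ (Submodule.mem_sup_left hm₀) (Submodule.mem_sup_right hm₂)
    · have : m₀ - m₂ = n₂ - n₀ := by rw [sub_eq_sub_iff_add_eq_add, h0, add_comm n₂ m₂, h2]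
      rw [this]
      exact Submodule.sub_mem _ (Submodule.mem_sup_right hn₂) (Submodule.mem_sup_left hn₀)
    · exact Submodule.sub_mem _ (Submodule.mem_sup_right hm₂) (Submodule.mem_sup_left hm₁)
    · have : m₂ - m₁ = n₁ - n₂ := by rw [sub_eq_sub_iff_add_eq_add, h2, add_comm n₁ m₁, h1]
      rw [this]
      exact Submodule.sub_mem _ (Submodule.mem_sup_left hn₁) (Submodule.mem_sup_right hn₂)
end

section
/- For closed subspaces M₀, M₁, N₀, N₁ of a Hilbert space with M₀ ⊥ N₀ and M₁ ⊥ N₁, one has (M₀ ∨ N₀) ∩ (M₁ ∨ N₁) ≤ N₀ ∨ (M₀ ∩ (M₁ ∨ ((M₀ ∨ M₁) ∩ (N₀ ∨ N₁)))), where ∨ is the closed-subspace join. -/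
/-- The join of two closed subspaces: the closure of their subspace sum. -/
noncomputable def cjoin {E : Type*} [NormedAddCommGroup E] [InnerProductSpace ℂ E]
    (M N : Submodule ℂ E) : Submodule ℂ E :=
  (M ⊔ N).topologicalClosure

lemma le_cjoin {E : Type*} [NormedAddCommGroup E] [InnerProductSpace ℂ E]
    (M N : Submodule ℂ E) : M ⊔ N ≤ cjoin M N :=
  Submodule.le_topologicalClosure _

lemma orth_decomp {E : Type*} [NormedAddCommGroup E] [InnerProductSpace ℂ E]
    [CompleteSpace E] {M N : Submodule ℂ E}
    (hM : IsClosed (M : Set E)) (hN : IsClosed (N : Set E))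
    (h : ∀ x ∈ M, ∀ y ∈ N, inner ℂ x y = (0 : ℂ)) {x : E} (hx : x ∈ cjoin M N) :
    ∃ m ∈ M, ∃ n ∈ N, x = m + n := by
  haveI : CompleteSpace M := hM.completeSpace_coe
  set f : E →L[ℂ] E := ContinuousLinearMap.id ℂ E - M.subtypeL.comp (Submodule.orthogonalProjectionOnto M)
    with hf
  have hfx : ∀ y : E, f y = y - (Submodule.orthogonalProjectionOnto M y : E) := fun y => rfl
  set S : Submodule ℂ E := N.comap (f : E →ₗ[ℂ] E) with hS
  have hSclosed : IsClosed (S : Set E) := hN.preimage f.continuous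
  have hsup : M ⊔ N ≤ S := by
    rw [sup_le_iff]
    constructor
    · intro m hm
      have : f m = 0 := by
        rw [hfx, ← Submodule.starProjection_apply, Submodule.starProjection_eq_self_iff.mpr hm, sub_self]
      show f m ∈ N
      rw [this]; exact N.zero_mem
    · intro n hn
      have hnMo : n ∈ Mᗮ := fun u hu => h u hu n hn
      have : f n = n := by
        rw [hfx, Submodule.orthogonalProjectionOnto_apply_of_mem_orthogonal hnMo]
        simp
      show f n ∈ N
      rw [this]; exact hn
  have hle : cjoin M N ≤ S := by
    have := Submodule.topologicalClosure_mono hsup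
    rwa [IsClosed.submodule_topologicalClosure_eq hSclosed] at this
  have hfxN : f x ∈ N := hle hx
  exact ⟨Submodule.orthogonalProjectionOnto M x, (Submodule.orthogonalProjectionOnto M x).2, f x, hfxN, by
    rw [hfx]; abel⟩

/-- For closed subspaces `M₀, M₁, N₀, N₁` of a Hilbert space with `M₀ ⊥ N₀`
and `M₁ ⊥ N₁`, one has
`(M₀ ∨ N₀) ∩ (M₁ ∨ N₁) ≤ N₀ ∨ (M₀ ∩ (M₁ ∨ ((M₀ ∨ M₁) ∩ (N₀ ∨ N₁))))`,
where `∨` is the closed-subspace join. -/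
theorem stmt_7 {E : Type*} [NormedAddCommGroup E] [InnerProductSpace ℂ E]
    [CompleteSpace E] (M₀ M₁ N₀ N₁ : Submodule ℂ E)
    (hM₀ : IsClosed (M₀ : Set E)) (hM₁ : IsClosed (M₁ : Set E))
    (hN₀ : IsClosed (N₀ : Set E)) (hN₁ : IsClosed (N₁ : Set E))
    (h₀ : ∀ x ∈ M₀, ∀ y ∈ N₀, inner ℂ x y = (0 : ℂ))
    (h₁ : ∀ x ∈ M₁, ∀ y ∈ N₁, inner ℂ x y = (0 : ℂ)) :
    cjoin M₀ N₀ ⊓ cjoin M₁ N₁ ≤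
      cjoin N₀ (M₀ ⊓ cjoin M₁ (cjoin M₀ M₁ ⊓ cjoin N₀ N₁)) := by
  intro x hx
  obtain ⟨hx0, hx1⟩ := hx
  obtain ⟨m₀, hm₀, n₀, hn₀, he₀⟩ := orth_decomp hM₀ hN₀ h₀ hx0
  obtain ⟨m₁, hm₁, n₁, hn₁, he₁⟩ := orth_decomp hM₁ hN₁ h₁ hx1
  have hd : m₀ - m₁ = n₁ - n₀ := by
    have : m₀ + n₀ = m₁ + n₁ := he₀ ▸ he₁
    have h2 : m₀ - m₁ = (m₁ + n₁) - m₁ - n₀ := by rw [← this]; abel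
    rw [h2]; abel
  have hdM : m₀ - m₁ ∈ cjoin M₀ M₁ :=
    le_cjoin M₀ M₁ (Submodule.sub_mem _ (Submodule.mem_sup_left hm₀)
      (Submodule.mem_sup_right hm₁))
  have hdN : m₀ - m₁ ∈ cjoin N₀ N₁ := by
    rw [hd]
    exact le_cjoin N₀ N₁ (Submodule.sub_mem _ (Submodule.mem_sup_right hn₁)
      (Submodule.mem_sup_left hn₀))
  have hm₀' : m₀ ∈ cjoin M₁ (cjoin M₀ M₁ ⊓ cjoin N₀ N₁) := by
    have : m₀ = m₁ + (m₀ - m₁) := by abel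
    rw [this]
    exact le_cjoin _ _ (Submodule.add_mem _ (Submodule.mem_sup_left hm₁)
      (Submodule.mem_sup_right ⟨hdM, hdN⟩))
  have : x = n₀ + m₀ := by rw [he₀]; abel
  rw [this]
  exact le_cjoin _ _ (Submodule.add_mem _ (Submodule.mem_sup_left hn₀)
    (Submodule.mem_sup_right ⟨hm₀, hm₀'⟩))
end

section
/- In a 3-dimensional real (or complex) inner product space, the specific 3OA instance holds for the lines a = span{(0,0,1)}, b = span{(1,0,0)}, q = span{(1,-2,-1)}, n = span{(1,1,-1)}: since a ⊥ b and q ⊥ n, one has (a + b) ∩ (q + n) ⊆ b + (a ∩ (q + ((a + q) ∩ (b + n)))). -/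
private lemma aux_aq : (WithLp.toLp 2 ![1, -2, 2] : EuclideanSpace ℝ (Fin 3)) ∈
    Submodule.span ℝ {(WithLp.toLp 2 ![0, 0, 1] : EuclideanSpace ℝ (Fin 3))} ⊔
    Submodule.span ℝ {(WithLp.toLp 2 ![1, -2, -1] : EuclideanSpace ℝ (Fin 3))} := by
  refine Submodule.mem_sup.2 ⟨(3 : ℝ) • WithLp.toLp 2 ![0,0,1],
    Submodule.smul_mem _ _ (Submodule.mem_span_singleton_self _),
    WithLp.toLp 2 ![1,-2,-1], Submodule.mem_span_singleton_self _, ?_⟩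
  ext i
  fin_cases i <;> simp [PiLp.smul_apply, PiLp.add_apply] <;> norm_num

private lemma aux_bn : (WithLp.toLp 2 ![1, -2, 2] : EuclideanSpace ℝ (Fin 3)) ∈
    Submodule.span ℝ {(WithLp.toLp 2 ![1, 0, 0] : EuclideanSpace ℝ (Fin 3))} ⊔
    Submodule.span ℝ {(WithLp.toLp 2 ![1, 1, -1] : EuclideanSpace ℝ (Fin 3))} := by
  refine Submodule.mem_sup.2 ⟨(3 : ℝ) • WithLp.toLp 2 ![1,0,0],
    Submodule.smul_mem _ _ (Submodule.mem_span_singleton_self _),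
    (-2 : ℝ) • WithLp.toLp 2 ![1,1,-1],
    Submodule.smul_mem _ _ (Submodule.mem_span_singleton_self _), ?_⟩
  ext i
  fin_cases i <;> simp [PiLp.smul_apply, PiLp.add_apply] <;> norm_num

private lemma aux_comb (S : Submodule ℝ (EuclideanSpace ℝ (Fin 3)))
    (hS : (WithLp.toLp 2 ![1, -2, 2] : EuclideanSpace ℝ (Fin 3)) ∈ S) :
    (WithLp.toLp 2 ![0, 0, 1] : EuclideanSpace ℝ (Fin 3)) ∈
      Submodule.span ℝ {(WithLp.toLp 2 ![1, -2, -1] : EuclideanSpace ℝ (Fin 3))} ⊔ S := by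
  refine Submodule.mem_sup.2 ⟨(-1/3 : ℝ) • WithLp.toLp 2 ![1,-2,-1],
    Submodule.smul_mem _ _ (Submodule.mem_span_singleton_self _),
    (1/3 : ℝ) • WithLp.toLp 2 ![1,-2,2], Submodule.smul_mem _ _ hS, ?_⟩
  ext i
  fin_cases i <;> simp [PiLp.smul_apply, PiLp.add_apply] <;> norm_num

/-- Verification of the 3OA instance for Bub's Kochen–Specker vectors in ℝ³:
with `a = span{(0,0,1)}`, `b = span{(1,0,0)}`, `q = span{(1,-2,-1)}`,
`n = span{(1,1,-1)}`, we have `a ⊥ b`, `q ⊥ n`, and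
`(a + b) ∩ (q + n) ⊆ b + (a ∩ (q + ((a + q) ∩ (b + n))))`. -/
theorem stmt_14 :
    let a : Submodule ℝ (EuclideanSpace ℝ (Fin 3)) :=
      Submodule.span ℝ {WithLp.toLp 2 ![0, 0, 1]}
    let b : Submodule ℝ (EuclideanSpace ℝ (Fin 3)) :=
      Submodule.span ℝ {WithLp.toLp 2 ![1, 0, 0]}
    let q : Submodule ℝ (EuclideanSpace ℝ (Fin 3)) :=
      Submodule.span ℝ {WithLp.toLp 2 ![1, -2, -1]}
    let n : Submodule ℝ (EuclideanSpace ℝ (Fin 3)) :=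
      Submodule.span ℝ {WithLp.toLp 2 ![1, 1, -1]}
    (∀ x ∈ a, ∀ y ∈ b, inner ℝ x y = (0 : ℝ)) ∧
    (∀ x ∈ q, ∀ y ∈ n, inner ℝ x y = (0 : ℝ)) ∧
    (a ⊔ b) ⊓ (q ⊔ n) ≤ b ⊔ (a ⊓ (q ⊔ ((a ⊔ q) ⊓ (b ⊔ n)))) := by
  intro a b q n
  refine ⟨?_, ?_, ?_⟩
  · intro x hx y hy
    obtain ⟨c, rfl⟩ := Submodule.mem_span_singleton.1 hx
    obtain ⟨d, rfl⟩ := Submodule.mem_span_singleton.1 hy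
    simp [PiLp.inner_apply, Fin.sum_univ_three, PiLp.smul_apply]
  · intro x hx y hy
    obtain ⟨c, rfl⟩ := Submodule.mem_span_singleton.1 hx
    obtain ⟨d, rfl⟩ := Submodule.mem_span_singleton.1 hy
    simp [PiLp.inner_apply, Fin.sum_univ_three, PiLp.smul_apply]
    ring
  · have hv : (WithLp.toLp 2 ![1, -2, 2] : EuclideanSpace ℝ (Fin 3)) ∈ (a ⊔ q) ⊓ (b ⊔ n) :=
      ⟨aux_aq, aux_bn⟩
    have h1 : a ≤ q ⊔ ((a ⊔ q) ⊓ (b ⊔ n)) := by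
      rw [Submodule.span_le]
      rintro x rfl
      exact aux_comb _ hv
    calc (a ⊔ b) ⊓ (q ⊔ n) ≤ a ⊔ b := inf_le_left
      _ = b ⊔ a := sup_comm _ _
      _ ≤ b ⊔ (a ⊓ (q ⊔ ((a ⊔ q) ⊓ (b ⊔ n)))) :=
          sup_le_sup_left (le_inf le_rfl h1) _
end
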